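/- Let x and y be nonzero integers with x ≠ y. Let F = ⊕_{i∈ℤ} ℤ be the group of finitely supported functions ℤ → ℤ with standard basis (e_i), let H ≤ F be the subgroup generated by the elements x·e_i − y·e_{i+1} for all i ∈ ℤ, let G = F/H, and let φ : G → G be the automorphism induced by the shift e_i ↦ e_{i+1}. Then id − φ : G → G is injective, and the cokernel of id − φ is a cyclic group of order |x − y|, generated by the class of e_0. -/

import Mathlib

open LaurentPolynomial

noncomputable section ShiftCokerAux

private lemma T_def (i : ℤ) : (AddMonoidAlgebra.single i 1 : LaurentPolynomial ℤ) = T i := rfl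

/-- Evaluation at `T = 1` as a ring hom on integer Laurent polynomials. -/
private def ev1 : LaurentPolynomial ℤ →+* ℤ :=
  AddMonoidAlgebra.liftNCRingHom (RingHom.id ℤ) 1 fun _ _ => Commute.all _ _

private lemma ev1_single (a b : ℤ) : ev1 (AddMonoidAlgebra.single a b) = b := by
  have := AddMonoidAlgebra.liftNC_single ((RingHom.id ℤ) : ℤ →+ ℤ)
    (((1 : Multiplicative ℤ →* ℤ)) : Multiplicative ℤ → ℤ) a b
  simpa [ev1, AddMonoidAlgebra.liftNCRingHom] using this

private lemma ev1_T (i : ℤ) : ev1 (T i) = 1 := ev1_single i 1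

private lemma ev1_toLaurent (q : Polynomial ℤ) :
    ev1 (Polynomial.toLaurent q) = Polynomial.eval 1 q := by
  have h : ev1.comp Polynomial.toLaurent = Polynomial.evalRingHom (1 : ℤ) := by
    apply Polynomial.ringHom_ext
    · intro a
      simp [Polynomial.toLaurent_C, ev1_single, LaurentPolynomial.C]
    · simp [Polynomial.toLaurent_X, ev1_T]
  simpa using congrArg (fun f => f q) h

private lemma oneSubT_ne_zero : (1 - T 1 : LaurentPolynomial ℤ) ≠ 0 := by
  intro h0
  have h : Polynomial.toLaurent (1 - Polynomial.X : Polynomial ℤ) = 1 - T 1 := by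
    rw [map_sub, Polynomial.toLaurent_X, Polynomial.toLaurent_one]
  have h1 : (1 - Polynomial.X : Polynomial ℤ) = 0 :=
    Polynomial.toLaurent_injective (by rw [h, h0, map_zero])
  have h2 : (1 : Polynomial ℤ) = Polynomial.X := sub_eq_zero.mp h1
  simpa using congrArg Polynomial.natDegree h2

private lemma dvd_of_ev1_zero (g : LaurentPolynomial ℤ) (hg : ev1 g = 0) :
    (1 - T 1) ∣ g := by
  obtain ⟨n, q, hq⟩ := g.exists_T_pow
  have hg' : g = Polynomial.toLaurent q * T (-(n : ℤ)) := by
    rw [hq, mul_assoc, ← T_add]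
    simp
  have hq1 : Polynomial.eval 1 q = 0 := by
    have := congrArg ev1 hq
    rw [ev1_toLaurent, map_mul, ev1_T, hg] at this
    simpa using this
  obtain ⟨r, hr⟩ := Polynomial.dvd_iff_isRoot.mpr hq1
  refine ⟨-(Polynomial.toLaurent r * T (-(n : ℤ))), ?_⟩
  rw [hg', hr, map_mul, map_sub, Polynomial.toLaurent_X, Polynomial.toLaurent_C, map_one]
  ring

/-- The key polynomial `x - y T`. -/
private def pp (x y : ℤ) : LaurentPolynomial ℤ :=
  (x : LaurentPolynomial ℤ) - (y : LaurentPolynomial ℤ) * T 1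

private lemma ev1_pp (x y : ℤ) : ev1 (pp x y) = x - y := by
  rw [pp, map_sub, map_mul, ev1_T, mul_one, map_intCast, map_intCast, Int.cast_id, Int.cast_id]

private lemma key_dvd (x y : ℤ) (hxy : x ≠ y) (f : LaurentPolynomial ℤ)
    (h : pp x y ∣ (1 - T 1) * f) : pp x y ∣ f := by
  obtain ⟨g, hg⟩ := h
  have hev : ev1 g = 0 := by
    have h1 := congrArg ev1 hg
    rw [map_mul, map_mul, map_sub, ev1_T, map_one, sub_self, zero_mul, ev1_pp] at h1
    rcases mul_eq_zero.mp h1.symm with h' | h'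
    · exact absurd (sub_eq_zero.mp h') hxy
    · exact h'
  obtain ⟨h', hh⟩ := dvd_of_ev1_zero g hev
  refine ⟨h', mul_left_cancel₀ oneSubT_ne_zero ?_⟩
  rw [hg, hh]
  ring

private lemma smul_T_eq (x y i : ℤ) :
    x • (T i : LaurentPolynomial ℤ) - y • T (i + 1) = T i * pp x y := by
  rw [zsmul_eq_mul, zsmul_eq_mul, pp, mul_sub, T_add]
  ring

private lemma lsingle_eq_smul (a b : ℤ) :
    (AddMonoidAlgebra.single a b : LaurentPolynomial ℤ) = b • (T a : LaurentPolynomial ℤ) := by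
  rw [zsmul_eq_mul,
    ← map_intCast (LaurentPolynomial.C : ℤ →+* LaurentPolynomial ℤ) b,
    ← single_eq_C_mul_T, Int.cast_id]

private lemma hxyc_eq (x y : ℤ) :
    (1 - T 1 : LaurentPolynomial ℤ) * (-(y : LaurentPolynomial ℤ))
      - (x - y) • (T 0 : LaurentPolynomial ℤ) = pp x y * -1 := by
  rw [zsmul_eq_mul, T_zero, pp]
  push_cast
  ring

private lemma mk'_eq_iff {G : Type*} [AddCommGroup G] (N : AddSubgroup G) (a b : G) :
    QuotientAddGroup.mk' N a = QuotientAddGroup.mk' N b ↔ a - b ∈ N := by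
  rw [QuotientAddGroup.mk'_apply, QuotientAddGroup.mk'_apply,
    QuotientAddGroup.eq_iff_sub_mem]

private lemma mk'_eq_zero_iff {G : Type*} [AddCommGroup G] (N : AddSubgroup G) (a : G) :
    QuotientAddGroup.mk' N a = 0 ↔ a ∈ N := by
  rw [QuotientAddGroup.mk'_apply, QuotientAddGroup.eq_zero_iff]

/-- The subgroup of the ideal generated by `pp x y`. -/
private def Isub (x y : ℤ) : AddSubgroup (LaurentPolynomial ℤ) :=
  (Ideal.span {pp x y}).toAddSubgroup

private lemma memI (x y : ℤ) (f : LaurentPolynomial ℤ) :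
    f ∈ Isub x y ↔ pp x y ∣ f :=
  Iff.trans (Submodule.mem_toAddSubgroup _) Ideal.mem_span_singleton

private lemma closure_eq_span (x y : ℤ) :
    AddSubgroup.closure
      {g : LaurentPolynomial ℤ | ∃ i : ℤ,
        g = x • AddMonoidAlgebra.single i 1 - y • AddMonoidAlgebra.single (i + 1) 1}
      = Isub x y := by
  apply le_antisymm
  · rw [AddSubgroup.closure_le]
    rintro g ⟨i, rfl⟩
    show _ ∈ Ideal.span {pp x y}
    rw [Ideal.mem_span_singleton, T_def, T_def, smul_T_eq]
    exact Dvd.intro_left _ rfl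
  · intro a ha
    have hd : pp x y ∣ a := (memI x y a).mp ha
    obtain ⟨c, rfl⟩ := hd
    clear ha
    induction c using AddMonoidAlgebra.induction with
    | zero => simpa using (AddSubgroup.zero_mem _)
    | single_add j b f _ _ ih =>
      rw [mul_add]
      refine AddSubgroup.add_mem _ ?_ ih
      rw [lsingle_eq_smul j b, mul_smul_comm, mul_comm (pp x y) (T j), ← smul_T_eq]
      refine AddSubgroup.zsmul_mem _ (AddSubgroup.subset_closure ?_) b
      exact ⟨j, rfl⟩

private lemma hom_ext_of_closure {M N : Type*} [AddGroup M] [AddGroup N] {s : Set M}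
    (hs : AddSubgroup.closure s = ⊤) (f g : M →+ N) (h : ∀ a ∈ s, f a = g a) :
    f = g := by
  ext a
  have ha : a ∈ AddSubgroup.closure s := hs ▸ AddSubgroup.mem_top a
  induction ha using AddSubgroup.closure_induction with
  | mem a ha => exact h a ha
  | zero => simp
  | add a b _ _ h1 h2 => simp [h1, h2]
  | neg a _ h1 => simp [h1]

set_option maxHeartbeats 2000000 in
private theorem aux (x y : ℤ)
    (hx : x ≠ 0) (hy : y ≠ 0) (hxy : x ≠ y)
    (H : AddSubgroup (LaurentPolynomial ℤ))
    (hH : H = AddSubgroup.closure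
      {g : LaurentPolynomial ℤ | ∃ i : ℤ,
        g = x • AddMonoidAlgebra.single i 1 - y • AddMonoidAlgebra.single (i + 1) 1})
    (φ : ((LaurentPolynomial ℤ) ⧸ H) →+ ((LaurentPolynomial ℤ) ⧸ H))
    (hφ : ∀ i : ℤ,
      φ (QuotientAddGroup.mk' H (AddMonoidAlgebra.single i 1))
        = QuotientAddGroup.mk' H (AddMonoidAlgebra.single (i + 1) 1)) :
    Function.Injective (AddMonoidHom.id ((LaurentPolynomial ℤ) ⧸ H) - φ) ∧
    (AddSubgroup.closure
        {QuotientAddGroup.mk' (AddMonoidHom.id ((LaurentPolynomial ℤ) ⧸ H) - φ).range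
          (QuotientAddGroup.mk' H (AddMonoidAlgebra.single 0 1))} = ⊤) ∧
    Nonempty
      ((((LaurentPolynomial ℤ) ⧸ H) ⧸ (AddMonoidHom.id ((LaurentPolynomial ℤ) ⧸ H) - φ).range)
        ≃+ ZMod (x - y).natAbs) := by
  rw [closure_eq_span x y] at hH
  subst hH
  set ψ : ((LaurentPolynomial ℤ) ⧸ Isub x y) →+ ((LaurentPolynomial ℤ) ⧸ Isub x y) :=
    AddMonoidHom.id ((LaurentPolynomial ℤ) ⧸ Isub x y) - φ with hψ
  -- φ is multiplication by T 1
  have hphi : ∀ f : LaurentPolynomial ℤ,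
      φ (QuotientAddGroup.mk' (Isub x y) f)
        = QuotientAddGroup.mk' (Isub x y) (T 1 * f) := by
    intro f
    induction f using AddMonoidAlgebra.induction with
    | zero => rw [map_zero, map_zero, mul_zero, map_zero]
    | single_add a b f _ _ ih =>
      rw [map_add, map_add, mul_add, map_add, ih]
      congr 1
      rw [lsingle_eq_smul a b, mul_smul_comm, ← T_add,
        show (1 + a) = a + 1 from add_comm 1 a]
      rw [map_zsmul (QuotientAddGroup.mk' (Isub x y)) b (T (a + 1)),
        map_zsmul (QuotientAddGroup.mk' (Isub x y)) b (T a), map_zsmul φ b,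
        ← T_def a, ← T_def (a + 1), hφ a]
  have hpsi : ∀ f : LaurentPolynomial ℤ,
      ψ (QuotientAddGroup.mk' (Isub x y) f)
        = QuotientAddGroup.mk' (Isub x y) ((1 - T 1) * f) := by
    intro f
    rw [hψ, AddMonoidHom.sub_apply, AddMonoidHom.id_apply, hphi, sub_mul, one_mul, map_sub]
  -- Part 1 : injectivity
  have inj : Function.Injective ψ := by
    rw [injective_iff_map_eq_zero]
    intro a ha
    obtain ⟨f, rfl⟩ := QuotientAddGroup.mk'_surjective (Isub x y) a
    rw [hpsi, mk'_eq_zero_iff] at ha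
    have hf : pp x y ∣ f := key_dvd x y hxy f ((memI x y _).mp ha)
    rw [mk'_eq_zero_iff]
    exact (memI x y f).mpr hf
  -- step lemma for classes in the cokernel
  have hstep : ∀ i : ℤ,
      QuotientAddGroup.mk' ψ.range (QuotientAddGroup.mk' (Isub x y) (AddMonoidAlgebra.single i 1))
        = QuotientAddGroup.mk' ψ.range
            (QuotientAddGroup.mk' (Isub x y) (AddMonoidAlgebra.single (i + 1) 1)) := by
    intro i
    rw [mk'_eq_iff]
    refine ⟨QuotientAddGroup.mk' (Isub x y) (AddMonoidAlgebra.single i 1), ?_⟩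
    rw [hψ, AddMonoidHom.sub_apply, AddMonoidHom.id_apply, hφ i]
  have hconst : ∀ i : ℤ,
      QuotientAddGroup.mk' ψ.range (QuotientAddGroup.mk' (Isub x y) (AddMonoidAlgebra.single i 1))
        = QuotientAddGroup.mk' ψ.range
            (QuotientAddGroup.mk' (Isub x y) (AddMonoidAlgebra.single 0 1)) := by
    intro i
    induction i using Int.induction_on with
    | zero => rfl
    | succ k ih => rw [← hstep k, ih]
    | pred k ih =>
      have h2 := hstep (-(k : ℤ) - 1)
      rw [show (-(k : ℤ) - 1) + 1 = -(k : ℤ) from by ring] at h2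
      rw [h2, ih]
  have hsingle : ∀ a b : ℤ,
      QuotientAddGroup.mk' ψ.range (QuotientAddGroup.mk' (Isub x y) (AddMonoidAlgebra.single a b))
        ∈ AddSubgroup.closure
            {QuotientAddGroup.mk' ψ.range
              (QuotientAddGroup.mk' (Isub x y) (AddMonoidAlgebra.single 0 1))} := by
    intro a b
    rw [lsingle_eq_smul a b, map_zsmul (QuotientAddGroup.mk' (Isub x y)) b (T a),
      map_zsmul (QuotientAddGroup.mk' ψ.range) b
        (QuotientAddGroup.mk' (Isub x y) (T a)),
      ← T_def a, hconst a]
    refine AddSubgroup.zsmul_mem _ ?_ b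
    exact AddSubgroup.subset_closure (Set.mem_singleton _)
  -- Part 2 : generation
  have gen : AddSubgroup.closure
      {QuotientAddGroup.mk' ψ.range
        (QuotientAddGroup.mk' (Isub x y) (AddMonoidAlgebra.single 0 1))} = ⊤ := by
    rw [eq_top_iff]
    rintro a -
    obtain ⟨b, rfl⟩ := QuotientAddGroup.mk'_surjective ψ.range a
    obtain ⟨f, rfl⟩ := QuotientAddGroup.mk'_surjective (Isub x y) b
    induction f using AddMonoidAlgebra.induction with
    | zero => simpa using AddSubgroup.zero_mem _
    | single_add a b f _ _ ih =>
      rw [map_add, map_add]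
      exact AddSubgroup.add_mem _ (hsingle a b) ih
  -- Part 3 : the cokernel is `ZMod |x - y|`
  obtain ⟨τ, hτa⟩ : ∃ τ : LaurentPolynomial ℤ →+ ZMod (x - y).natAbs,
      ∀ f, τ f = ((ev1 f : ℤ) : ZMod (x - y).natAbs) :=
    ⟨((Int.castRingHom (ZMod (x - y).natAbs)).comp ev1).toAddMonoidHom, fun _ => rfl⟩
  have hcast0 : ((x - y : ℤ) : ZMod (x - y).natAbs) = 0 :=
    (ZMod.intCast_zmod_eq_zero_iff_dvd _ _).mpr (Int.natAbs_dvd.mpr dvd_rfl)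
  have hker1 : Isub x y ≤ τ.ker := by
    intro f hf
    obtain ⟨c, rfl⟩ := (memI x y f).mp hf
    rw [AddMonoidHom.mem_ker, hτa, map_mul, Int.cast_mul, ev1_pp, hcast0, zero_mul]
  obtain ⟨ρ1, hρ1a⟩ : ∃ ρ1 : ((LaurentPolynomial ℤ) ⧸ Isub x y) →+ ZMod (x - y).natAbs,
      ∀ f, ρ1 (QuotientAddGroup.mk' (Isub x y) f) = τ f :=
    ⟨QuotientAddGroup.lift _ τ hker1, fun _ => rfl⟩
  have hker2 : ψ.range ≤ ρ1.ker := by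
    rintro a ⟨g, rfl⟩
    obtain ⟨f, rfl⟩ := QuotientAddGroup.mk'_surjective (Isub x y) g
    rw [AddMonoidHom.mem_ker, hpsi, hρ1a, hτa, map_mul, map_sub, ev1_T, map_one,
      sub_self, zero_mul, Int.cast_zero]
  obtain ⟨ρ, hρa⟩ : ∃ ρ : (((LaurentPolynomial ℤ) ⧸ Isub x y) ⧸ ψ.range) →+
      ZMod (x - y).natAbs,
      ∀ g, ρ (QuotientAddGroup.mk' ψ.range g) = ρ1 g :=
    ⟨QuotientAddGroup.lift _ ρ1 hker2, fun _ => rfl⟩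
  have hρc : ρ (QuotientAddGroup.mk' ψ.range
      (QuotientAddGroup.mk' (Isub x y) (AddMonoidAlgebra.single 0 1))) = 1 := by
    rw [hρa, hρ1a, hτa, ev1_single, Int.cast_one]
  -- the homomorphism `k ↦ k • [e₀]` into the cokernel
  obtain ⟨χ, hχa⟩ : ∃ χ : ℤ →+ (((LaurentPolynomial ℤ) ⧸ Isub x y) ⧸ ψ.range),
      ∀ k : ℤ, χ k = QuotientAddGroup.mk' ψ.range
        (QuotientAddGroup.mk' (Isub x y) (k • AddMonoidAlgebra.single 0 1)) :=
    ⟨((QuotientAddGroup.mk' ψ.range).comp (QuotientAddGroup.mk' (Isub x y))).comp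
      (zmultiplesHom _ (AddMonoidAlgebra.single 0 1)), fun _ => rfl⟩
  have hχ1 : χ 1 = QuotientAddGroup.mk' ψ.range
      (QuotientAddGroup.mk' (Isub x y) (AddMonoidAlgebra.single 0 1)) := by
    rw [hχa, one_zsmul]
  have hxy0 : χ (x - y) = 0 := by
    rw [hχa, mk'_eq_zero_iff]
    refine ⟨QuotientAddGroup.mk' (Isub x y) (-(y : LaurentPolynomial ℤ)), ?_⟩
    rw [hpsi, mk'_eq_iff]
    refine (memI x y _).mpr ⟨-1, ?_⟩
    rw [T_def 0]
    exact hxyc_eq x y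
  have hord : χ (((x - y).natAbs : ℤ)) = 0 := by
    rcases Int.natAbs_eq (x - y) with h | h
    · rw [← h]; exact hxy0
    · have h' : (((x - y).natAbs : ℤ)) = -(x - y) := by omega
      rw [h', map_neg, hxy0, neg_zero]
  obtain ⟨ι, hιa⟩ : ∃ ι : ZMod (x - y).natAbs →+
      (((LaurentPolynomial ℤ) ⧸ Isub x y) ⧸ ψ.range),
      ∀ k : ℤ, ι ((k : ZMod (x - y).natAbs)) = χ k :=
    ⟨ZMod.lift _ ⟨χ, hord⟩, fun k => ZMod.lift_coe _ _ k⟩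
  have hιc : ι 1 = QuotientAddGroup.mk' ψ.range
      (QuotientAddGroup.mk' (Isub x y) (AddMonoidAlgebra.single 0 1)) := by
    have h1' := hιa 1
    rw [Int.cast_one] at h1'
    exact h1'.trans hχ1
  have h1 : ι.comp ρ = AddMonoidHom.id _ := by
    apply hom_ext_of_closure gen
    intro a ha
    rw [Set.mem_singleton_iff] at ha
    subst ha
    rw [AddMonoidHom.comp_apply, hρc, hιc, AddMonoidHom.id_apply]
  have hcomp : ρ.comp χ = Int.castAddHom (ZMod (x - y).natAbs) := by
    apply AddMonoidHom.ext_int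
    rw [AddMonoidHom.comp_apply, hχ1, hρc]
    simp
  have h2 : ρ.comp ι = AddMonoidHom.id _ := by
    apply AddMonoidHom.ext
    intro a
    obtain ⟨k, rfl⟩ := ZMod.intCast_surjective a
    rw [AddMonoidHom.comp_apply, hιa]
    have : ρ (χ k) = (ρ.comp χ) k := rfl
    rw [this, hcomp]
    simp
  exact ⟨inj, gen, ⟨AddMonoidHom.toAddEquiv ρ ι h1 h2⟩⟩

private lemma transport {A B Z : Type*} [AddCommGroup A] [AddCommGroup B] [AddCommGroup Z]
    (e : A ≃+ B) (H : AddSubgroup A) (H' : AddSubgroup B) (he : H.map (e : A →+ B) = H')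
    (φ : A ⧸ H →+ A ⧸ H) (a0 : A) (b0 : B) (hb0 : e a0 = b0)
    (h : Function.Injective (AddMonoidHom.id (B ⧸ H') -
          ((QuotientAddGroup.congr H H' e he : A ⧸ H →+ B ⧸ H').comp
            (φ.comp ((QuotientAddGroup.congr H H' e he).symm : B ⧸ H' →+ A ⧸ H)))) ∧
      (AddSubgroup.closure
        {QuotientAddGroup.mk' (AddMonoidHom.id (B ⧸ H') -
          ((QuotientAddGroup.congr H H' e he : A ⧸ H →+ B ⧸ H').comp
            (φ.comp ((QuotientAddGroup.congr H H' e he).symm : B ⧸ H' →+ A ⧸ H)))).range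
          (QuotientAddGroup.mk' H' b0)} = ⊤) ∧
      Nonempty (((B ⧸ H') ⧸ (AddMonoidHom.id (B ⧸ H') -
          ((QuotientAddGroup.congr H H' e he : A ⧸ H →+ B ⧸ H').comp
            (φ.comp ((QuotientAddGroup.congr H H' e he).symm : B ⧸ H' →+ A ⧸ H)))).range) ≃+ Z)) :
    Function.Injective (AddMonoidHom.id (A ⧸ H) - φ) ∧
    (AddSubgroup.closure
        {QuotientAddGroup.mk' (AddMonoidHom.id (A ⧸ H) - φ).range
          (QuotientAddGroup.mk' H a0)} = ⊤) ∧
    Nonempty (((A ⧸ H) ⧸ (AddMonoidHom.id (A ⧸ H) - φ).range) ≃+ Z) := by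
  subst hb0
  set E := QuotientAddGroup.congr H H' e he with hE
  set φ' : B ⧸ H' →+ B ⧸ H' := (E : A ⧸ H →+ B ⧸ H').comp (φ.comp (E.symm : B ⧸ H' →+ A ⧸ H))
    with hφ'
  obtain ⟨h1, h2, ⟨iso⟩⟩ := h
  have key : ∀ a, (AddMonoidHom.id (B ⧸ H') - φ') (E a) = E ((AddMonoidHom.id (A ⧸ H) - φ) a) := by
    intro a
    simp [φ', map_sub]
  have hr : (AddMonoidHom.id (A ⧸ H) - φ).range.map (E : A ⧸ H →+ B ⧸ H')
      = (AddMonoidHom.id (B ⧸ H') - φ').range := by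
    ext b
    constructor
    · rintro ⟨_, ⟨a, rfl⟩, rfl⟩
      exact ⟨E a, key a⟩
    · rintro ⟨c, rfl⟩
      refine ⟨_, ⟨E.symm c, rfl⟩, ?_⟩
      have := key (E.symm c)
      rw [E.apply_symm_apply] at this
      exact this.symm
  set E2 := QuotientAddGroup.congr _ _ E hr with hE2
  refine ⟨?_, ?_, ⟨E2.trans iso⟩⟩
  · intro a b hab
    apply E.injective
    apply h1
    rw [key, key, hab]
  · have hm : E2 (QuotientAddGroup.mk' _ (QuotientAddGroup.mk' H a0))
        = QuotientAddGroup.mk' _ (QuotientAddGroup.mk' H' (e a0)) := by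
      rfl
    rw [← hm] at h2
    have h3 := congrArg (AddSubgroup.map E2.symm.toAddMonoidHom) h2
    rw [AddMonoidHom.map_closure, Set.image_singleton,
      AddSubgroup.map_top_of_surjective E2.symm.toAddMonoidHom E2.symm.surjective] at h3
    simpa using h3

end ShiftCokerAux

theorem shift_quotient_injective_coker_cyclic (x y : ℤ)
    (hx : x ≠ 0) (hy : y ≠ 0) (hxy : x ≠ y)
    (H : AddSubgroup (ℤ →₀ ℤ))
    (hH : H = AddSubgroup.closure
      {g : ℤ →₀ ℤ | ∃ i : ℤ,
        g = x • Finsupp.single i 1 - y • Finsupp.single (i + 1) 1})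
    (φ : ((ℤ →₀ ℤ) ⧸ H) →+ ((ℤ →₀ ℤ) ⧸ H))
    (hφ : ∀ i : ℤ,
      φ (QuotientAddGroup.mk' H (Finsupp.single i 1))
        = QuotientAddGroup.mk' H (Finsupp.single (i + 1) 1)) :
    Function.Injective (AddMonoidHom.id ((ℤ →₀ ℤ) ⧸ H) - φ) ∧
    (AddSubgroup.closure
        {QuotientAddGroup.mk' (AddMonoidHom.id ((ℤ →₀ ℤ) ⧸ H) - φ).range
          (QuotientAddGroup.mk' H (Finsupp.single 0 1))} = ⊤) ∧
    Nonempty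
      ((((ℤ →₀ ℤ) ⧸ H) ⧸ (AddMonoidHom.id ((ℤ →₀ ℤ) ⧸ H) - φ).range)
        ≃+ ZMod (x - y).natAbs) :=
  transport (AddMonoidAlgebra.coeffAddEquiv (R := ℤ) (M := ℤ)).symm H _ rfl φ _ _ rfl
    (aux x y hx hy hxy _ (by
      rw [hH, AddMonoidHom.map_closure]
      congr 1
      ext g
      constructor
      · rintro ⟨f, ⟨i, rfl⟩, rfl⟩
        exact ⟨i, by rw [map_sub, map_zsmul, map_zsmul]; rfl⟩
      · rintro ⟨i, rfl⟩
        exact ⟨_, ⟨i, rfl⟩, by rw [map_sub, map_zsmul, map_zsmul]; rfl⟩)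
      _ (fun i => by
        exact congrArg (QuotientAddGroup.congr H _
          (AddMonoidAlgebra.coeffAddEquiv (R := ℤ) (M := ℤ)).symm rfl) (hφ i)))
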